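/- Let β ∈ (0,1). Let Q be an ℕ-valued random variable with P(Q = k) = p_β(k) for all k ≥ 1, let (U_i)_{i≥1} be i.i.d. random variables uniformly distributed on [0,1], and suppose that Q, U_1, U_2, … are mutually independent. Then the random variable min_{1 ≤ i ≤ Q} U_i has cumulative distribution function t ↦ t^β on [0,1]: for every t ∈ [0,1], P(min_{1 ≤ i ≤ Q} U_i ≤ t) = t^β. -/

import Mathlib

open MeasureTheory ProbabilityTheory
open scoped BigOperators

open Finset Filter

noncomputable def karlinQ (β : ℝ) (k : ℕ) : ℝ :=
  β * (∏ j ∈ Finset.range (k - 1), ((j : ℝ) + 1 - β)) / (Nat.factorial k)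

variable {β : ℝ}

lemma karlin_prod_pos (hβ1 : β < 1) (n : ℕ) :
    0 < ∏ j ∈ Finset.range n, ((j : ℝ) + 1 - β) := by
  apply Finset.prod_pos
  intro j _
  have : (0:ℝ) ≤ j := Nat.cast_nonneg j
  linarith

lemma karlinQ_pos (hβ0 : 0 < β) (hβ1 : β < 1) (k : ℕ) : 0 < karlinQ β (k + 1) := by
  unfold karlinQ
  apply div_pos
  · exact mul_pos hβ0 (karlin_prod_pos hβ1 _)
  · exact_mod_cast Nat.factorial_pos (k+1)

lemma karlinQ_succ (hβ1 : β < 1) (n : ℕ) :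
    karlinQ β (n + 1)
      = (β / ((n : ℝ) + 1)) * ∏ j ∈ Finset.range n, (((j : ℝ) + 1 - β) / ((j : ℝ) + 1)) := by
  unfold karlinQ
  rw [Finset.prod_div_distrib]
  have hfac : (∏ j ∈ Finset.range n, ((j : ℝ) + 1)) = (Nat.factorial n : ℝ) := by
    induction n with
    | zero => simp
    | succ m ih => rw [Finset.prod_range_succ, ih, Nat.factorial_succ]; push_cast; ring
  rw [hfac]
  have h1 : ((n:ℕ)+1 - 1) = n := by simp
  rw [h1, Nat.factorial_succ]
  have h2 : (Nat.factorial n : ℝ) ≠ 0 := by exact_mod_cast Nat.factorial_ne_zero n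
  have h3 : ((n:ℝ) + 1) ≠ 0 := by positivity
  push_cast
  field_simp

lemma karlinQ_rec (hβ1 : β < 1) (n : ℕ) :
    ((n : ℝ) + 2) * karlinQ β (n + 2) = ((n : ℝ) + 1 - β) * karlinQ β (n + 1) := by
  rw [karlinQ_succ hβ1 (n+1), karlinQ_succ hβ1 n, Finset.prod_range_succ]
  have h3 : ((n:ℝ) + 1) ≠ 0 := by positivity
  have h4 : ((n:ℝ) + 2) ≠ 0 := by positivity
  push_cast
  field_simp
  ring

lemma karlin_sum_q (hβ0 : 0 < β) (hβ1 : β < 1) (n : ℕ) :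
    ∑ k ∈ Finset.range n, karlinQ β (k + 1)
      = 1 - ∏ j ∈ Finset.range n, (((j : ℝ) + 1 - β) / ((j : ℝ) + 1)) := by
  induction n with
  | zero => simp
  | succ m ih =>
      rw [Finset.sum_range_succ, ih, Finset.prod_range_succ, karlinQ_succ hβ1 m]
      have h3 : ((m:ℝ) + 1) ≠ 0 := by positivity
      field_simp
      ring

lemma karlin_ratio_nonneg (hβ1 : β < 1) (j : ℕ) :
    0 ≤ ((j : ℝ) + 1 - β) / ((j : ℝ) + 1) := by
  apply div_nonneg
  · have : (0:ℝ) ≤ j := Nat.cast_nonneg j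
    linarith
  · positivity

lemma karlin_prodratio_nonneg (hβ1 : β < 1) (n : ℕ) :
    0 ≤ ∏ j ∈ Finset.range n, (((j : ℝ) + 1 - β) / ((j : ℝ) + 1)) :=
  Finset.prod_nonneg fun j _ => karlin_ratio_nonneg hβ1 j

lemma karlin_prodratio_le_one (hβ0 : 0 < β) (hβ1 : β < 1) (n : ℕ) :
    ∏ j ∈ Finset.range n, (((j : ℝ) + 1 - β) / ((j : ℝ) + 1)) ≤ 1 := by
  apply Finset.prod_le_one (fun j _ => karlin_ratio_nonneg hβ1 j)
  intro j _
  rw [div_le_one (by positivity)]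
  linarith

lemma karlin_prod_tendsto (hβ0 : 0 < β) (hβ1 : β < 1) :
    Tendsto (fun n => ∏ j ∈ Finset.range n, (((j : ℝ) + 1 - β) / ((j : ℝ) + 1)))
      atTop (nhds 0) := by
  have hbound : ∀ n, ∏ j ∈ Finset.range n, (((j : ℝ) + 1 - β) / ((j : ℝ) + 1))
      ≤ Real.exp (-β * ∑ j ∈ Finset.range n, (1 / ((j:ℝ) + 1))) := by
    intro n
    have : ∀ j ∈ Finset.range n, ((j : ℝ) + 1 - β) / ((j : ℝ) + 1)
        ≤ Real.exp (-(β / ((j:ℝ) + 1))) := by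
      intro j _
      have hj : (0:ℝ) < (j:ℝ) + 1 := by positivity
      have := Real.add_one_le_exp (-(β / ((j:ℝ) + 1)))
      have hval : ((j : ℝ) + 1 - β) / ((j : ℝ) + 1) = -(β / ((j:ℝ) + 1)) + 1 := by
        field_simp; ring
      rw [hval]; exact this
    calc ∏ j ∈ Finset.range n, (((j : ℝ) + 1 - β) / ((j : ℝ) + 1))
        ≤ ∏ j ∈ Finset.range n, Real.exp (-(β / ((j:ℝ) + 1))) :=
          Finset.prod_le_prod (fun j _ => karlin_ratio_nonneg hβ1 j) this
      _ = Real.exp (∑ j ∈ Finset.range n, -(β / ((j:ℝ) + 1))) := (Real.exp_sum _ _).symm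
      _ = Real.exp (-β * ∑ j ∈ Finset.range n, (1 / ((j:ℝ) + 1))) := by
          rw [Finset.mul_sum]; congr 1; apply Finset.sum_congr rfl; intro j _; ring
  have hexp : Tendsto (fun n => Real.exp (-β * ∑ j ∈ Finset.range n, (1 / ((j:ℝ) + 1))))
      atTop (nhds 0) := by
    apply Real.tendsto_exp_atBot.comp
    have hH := Real.tendsto_sum_range_one_div_nat_succ_atTop
    have : Tendsto (fun n => -β * ∑ j ∈ Finset.range n, (1 / ((j:ℝ) + 1))) atTop atBot := by
      apply Tendsto.const_mul_atTop_of_neg (by linarith : -β < 0)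
      exact hH
    exact this
  exact squeeze_zero (fun n => karlin_prodratio_nonneg hβ1 n) hbound hexp

lemma karlin_hasSum_one (hβ0 : 0 < β) (hβ1 : β < 1) :
    HasSum (fun k => karlinQ β (k + 1)) 1 := by
  have hnn : ∀ k, 0 ≤ karlinQ β (k + 1) := fun k => (karlinQ_pos hβ0 hβ1 k).le
  have htend : Tendsto (fun n => ∑ k ∈ Finset.range n, karlinQ β (k + 1)) atTop (nhds 1) := by
    simp only [karlin_sum_q hβ0 hβ1]
    have := (karlin_prod_tendsto hβ0 hβ1).const_sub 1
    simpa using this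
  have hsummable : Summable (fun k => karlinQ β (k + 1)) := by
    apply summable_of_sum_range_le (c := 1) hnn
    intro n
    rw [karlin_sum_q hβ0 hβ1]
    have := karlin_prodratio_nonneg hβ1 n
    linarith
  have := hsummable.hasSum
  have h1 : (∑' k, karlinQ β (k+1)) = 1 :=
    tendsto_nhds_unique this.tendsto_sum_nat htend
  rwa [h1] at this

open MeasureTheory

section Integral

variable {x : ℝ}

lemma karlin_cont_on (hx1 : x < 1) (n : ℕ) (c : ℝ) :
    ContinuousOn (fun s : ℝ => (x - s) ^ n * (1 - s) ^ c) (Set.uIcc 0 x) := by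
  apply ContinuousOn.mul
  · exact (Continuous.pow (continuous_const.sub continuous_id) n).continuousOn
  · apply ContinuousOn.rpow_const
    · exact (continuous_const.sub continuous_id).continuousOn
    · intro s hs
      left
      rcases Set.mem_uIcc.mp hs with ⟨h1, h2⟩ | ⟨h1, h2⟩ <;> intro hc <;>
        nlinarith [sub_eq_zero.mp hc]

lemma karlin_integrable (hx1 : x < 1) (n : ℕ) (c : ℝ) :
    IntervalIntegrable (fun s : ℝ => (x - s) ^ n * (1 - s) ^ c) volume 0 x :=
  (karlin_cont_on hx1 n c).intervalIntegrable

lemma karlin_integral_base (hβ0 : 0 < β) (hx0 : 0 ≤ x) (hx1 : x < 1) :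
    ∫ s in (0:ℝ)..x, (1 - s) ^ (β - 1) = (1 - (1 - x) ^ β) / β := by
  have hderiv : ∀ s ∈ Set.uIcc (0:ℝ) x,
      HasDerivAt (fun s : ℝ => -((1 - s) ^ β) / β) ((1 - s) ^ (β - 1)) s := by
    intro s hs
    rw [Set.uIcc_of_le hx0] at hs
    have hspos : 0 < 1 - s := by linarith [hs.2]
    have hlin : HasDerivAt (fun s : ℝ => 1 - s) (-1) s := (hasDerivAt_id s).const_sub 1
    have hrpow : HasDerivAt (fun y : ℝ => y ^ β) (β * (1 - s) ^ (β - 1)) (1 - s) :=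
      Real.hasDerivAt_rpow_const (Or.inl (ne_of_gt hspos))
    have hcomp := (hrpow.comp s hlin)
    have := (hcomp.div_const β).neg
    have hβ' : β ≠ 0 := ne_of_gt hβ0
    convert this using 1
    · rfl
    · rfl
    · funext y
      simp only [Function.comp_apply, Pi.neg_apply]
      ring
    · rw [mul_neg_one, neg_div, neg_neg, mul_comm, mul_div_assoc, div_self hβ', mul_one]
  have hint : IntervalIntegrable (fun s : ℝ => (1 - s) ^ (β - 1)) volume 0 x := by
    have := karlin_integrable (x := x) hx1 0 (β - 1)
    simpa using this
  have := intervalIntegral.integral_eq_sub_of_hasDerivAt hderiv hint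
  rw [this]
  have h1 : ((1:ℝ) - 0) ^ β = 1 := by rw [sub_zero, Real.one_rpow]
  rw [h1]
  ring

lemma karlin_step (hβ0 : 0 < β) (hβ1 : β < 1) (hx0 : 0 ≤ x) (hx1 : x < 1) (n : ℕ) :
    ((n : ℝ) + 1) * ∫ s in (0:ℝ)..x, (x - s) ^ n * (1 - s) ^ (β - 1 - n)
      = x ^ (n + 1)
        + ((n : ℝ) + 1 - β)
          * ∫ s in (0:ℝ)..x, (x - s) ^ (n + 1) * (1 - s) ^ (β - 1 - (n + 1 : ℕ)) := by
  have hderiv : ∀ s ∈ Set.uIcc (0:ℝ) x,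
      HasDerivAt (fun s : ℝ => (x - s) ^ (n + 1) * (1 - s) ^ (β - 1 - n))
        (-(((n : ℝ) + 1) * ((x - s) ^ n * (1 - s) ^ (β - 1 - n)))
          + ((n : ℝ) + 1 - β) * ((x - s) ^ (n + 1) * (1 - s) ^ (β - 1 - (n + 1 : ℕ)))) s := by
    intro s hs
    rw [Set.uIcc_of_le hx0] at hs
    have hspos : 0 < 1 - s := by linarith [hs.2]
    have hlin1 : HasDerivAt (fun s : ℝ => x - s) (-1) s := (hasDerivAt_id s).const_sub x
    have h1 : HasDerivAt (fun s : ℝ => (x - s) ^ (n + 1))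
        (((n : ℝ) + 1) * (x - s) ^ n * (-1)) s := by
      have := hlin1.pow (n + 1)
      simpa [Pi.pow_def] using this
    have hlin2 : HasDerivAt (fun s : ℝ => 1 - s) (-1) s := (hasDerivAt_id s).const_sub 1
    have hrpow : HasDerivAt (fun y : ℝ => y ^ (β - 1 - n))
        ((β - 1 - n) * (1 - s) ^ (β - 1 - n - 1)) (1 - s) :=
      Real.hasDerivAt_rpow_const (Or.inl (ne_of_gt hspos))
    have h2 : HasDerivAt (fun s : ℝ => (1 - s) ^ (β - 1 - n))
        ((β - 1 - n) * (1 - s) ^ (β - 1 - n - 1) * (-1)) s := hrpow.comp s hlin2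
    have := h1.mul h2
    convert this using 1
    · rfl
    · rfl
    · rfl
    have hexp : β - 1 - ((n : ℕ) + 1 : ℕ) = β - 1 - (n : ℝ) - 1 := by push_cast; ring
    rw [hexp]
    ring
  have hint1 := karlin_integrable (x := x) hx1 n (β - 1 - n)
  have hint2 := karlin_integrable (x := x) hx1 (n + 1) (β - 1 - (n + 1 : ℕ))
  have hneg : IntervalIntegrable
      (fun s : ℝ => -(((n : ℝ) + 1) * ((x - s) ^ n * (1 - s) ^ (β - 1 - n)))) volume 0 x := by
    have := (hint1.const_mul ((n : ℝ) + 1)).neg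
    simpa [Pi.neg_def] using this
  have hc2 : IntervalIntegrable
      (fun s : ℝ => ((n : ℝ) + 1 - β) * ((x - s) ^ (n + 1) * (1 - s) ^ (β - 1 - (n + 1 : ℕ))))
      volume 0 x := hint2.const_mul _
  have hintsum : IntervalIntegrable
      (fun s : ℝ => -(((n : ℝ) + 1) * ((x - s) ^ n * (1 - s) ^ (β - 1 - n)))
        + ((n : ℝ) + 1 - β) * ((x - s) ^ (n + 1) * (1 - s) ^ (β - 1 - (n + 1 : ℕ)))) volume 0 x :=
    hneg.add hc2
  have hFT := intervalIntegral.integral_eq_sub_of_hasDerivAt hderiv hintsum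
  rw [intervalIntegral.integral_add hneg hc2,
    intervalIntegral.integral_neg, intervalIntegral.integral_const_mul,
    intervalIntegral.integral_const_mul] at hFT
  have hend : (x - x) ^ (n + 1) * (1 - x) ^ (β - 1 - n) = 0 := by
    rw [sub_self, zero_pow (Nat.succ_ne_zero n), zero_mul]
  have hstart : (x - 0) ^ (n + 1) * (1 - 0) ^ (β - 1 - n) = x ^ (n + 1) := by
    rw [sub_zero, sub_zero, Real.one_rpow, mul_one]
  rw [hend, hstart] at hFT
  linarith [hFT]

end Integral

section MainAnalytic

variable {x : ℝ}

lemma karlin_taylor_ident (hβ0 : 0 < β) (hβ1 : β < 1) (hx0 : 0 ≤ x) (hx1 : x < 1) (n : ℕ) :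
    1 - (1 - x) ^ β
      = (∑ k ∈ Finset.range n, karlinQ β (k + 1) * x ^ (k + 1))
        + ((n : ℝ) + 1) * karlinQ β (n + 1)
          * ∫ s in (0:ℝ)..x, (x - s) ^ n * (1 - s) ^ (β - 1 - n) := by
  induction n with
  | zero =>
      simp only [Finset.range_zero, Finset.sum_empty, zero_add, Nat.cast_zero, pow_zero, one_mul]
      have hq1 : karlinQ β 1 = β := by simp [karlinQ]
      have hbase := karlin_integral_base (β := β) hβ0 hx0 hx1
      have hβ' : β ≠ 0 := ne_of_gt hβ0
      simp only [sub_zero]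
      rw [hq1, hbase]
      field_simp
  | succ m ih =>
      have hstep := karlin_step hβ0 hβ1 hx0 hx1 m
      have hrec := karlinQ_rec hβ1 m
      rw [ih, Finset.sum_range_succ]
      have hmain :
          ((m : ℝ) + 1) * karlinQ β (m + 1)
              * ∫ s in (0:ℝ)..x, (x - s) ^ m * (1 - s) ^ (β - 1 - m)
            = karlinQ β (m + 1) * x ^ (m + 1)
              + (((m:ℝ) + 1 + 1) * karlinQ β (m + 2))
                * ∫ s in (0:ℝ)..x, (x - s) ^ (m + 1) * (1 - s) ^ (β - 1 - (m + 1 : ℕ)) := by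
        have h1 : ((m : ℝ) + 1) * karlinQ β (m + 1)
              * ∫ s in (0:ℝ)..x, (x - s) ^ m * (1 - s) ^ (β - 1 - m)
            = karlinQ β (m + 1) * (((m : ℝ) + 1)
              * ∫ s in (0:ℝ)..x, (x - s) ^ m * (1 - s) ^ (β - 1 - m)) := by ring
        rw [h1, hstep]
        have h2 : ((m:ℝ) + 1 + 1) * karlinQ β (m + 2) = ((m:ℝ) + 2) * karlinQ β (m + 2) := by
          ring
        rw [h2, hrec]
        ring
      rw [hmain]
      have hcast : (((m + 1 : ℕ)) : ℝ) + 1 = (m : ℝ) + 1 + 1 := by push_cast; ring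
      rw [hcast]
      ring

lemma karlin_remainder_le (hβ0 : 0 < β) (hβ1 : β < 1) (hx0 : 0 ≤ x) (hx1 : x < 1) (n : ℕ) :
    ∫ s in (0:ℝ)..x, (x - s) ^ n * (1 - s) ^ (β - 1 - n) ≤ x ^ n * (1 / β) := by
  have hmono : ∀ s ∈ Set.Icc (0:ℝ) x,
      (x - s) ^ n * (1 - s) ^ (β - 1 - n) ≤ x ^ n * (1 - s) ^ (β - 1) := by
    intro s hs
    have hspos : 0 < 1 - s := by linarith [hs.2]
    have hxs : 0 ≤ x - s := by linarith [hs.2]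
    have hkey : x - s ≤ x * (1 - s) := by nlinarith [hs.1, hs.2]
    have h1 : (x - s) ^ n ≤ (x * (1 - s)) ^ n := pow_le_pow_left₀ hxs hkey n
    have h2 : (x * (1 - s)) ^ n = x ^ n * ((1 - s) : ℝ) ^ (n : ℝ) := by
      rw [mul_pow, Real.rpow_natCast]
    have h3 : ((1 - s) : ℝ) ^ (n : ℝ) * (1 - s) ^ (β - 1 - n) = (1 - s) ^ (β - 1) := by
      rw [← Real.rpow_add hspos]
      congr 1
      ring
    calc (x - s) ^ n * (1 - s) ^ (β - 1 - n)
        ≤ (x * (1 - s)) ^ n * (1 - s) ^ (β - 1 - n) := by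
          apply mul_le_mul_of_nonneg_right h1 (Real.rpow_nonneg hspos.le _)
      _ = x ^ n * (((1 - s) : ℝ) ^ (n : ℝ) * (1 - s) ^ (β - 1 - n)) := by rw [h2]; ring
      _ = x ^ n * (1 - s) ^ (β - 1) := by rw [h3]
  have hint1 := karlin_integrable (x := x) hx1 n (β - 1 - n)
  have hint2 : IntervalIntegrable (fun s : ℝ => x ^ n * (1 - s) ^ (β - 1)) volume 0 x := by
    have := (karlin_integrable (x := x) hx1 0 (β - 1)).const_mul (x ^ n)
    simpa using this
  have hle := intervalIntegral.integral_mono_on hx0 hint1 hint2 hmono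
  calc ∫ s in (0:ℝ)..x, (x - s) ^ n * (1 - s) ^ (β - 1 - n)
      ≤ ∫ s in (0:ℝ)..x, x ^ n * (1 - s) ^ (β - 1) := hle
    _ = x ^ n * ((1 - (1 - x) ^ β) / β) := by
        rw [intervalIntegral.integral_const_mul, karlin_integral_base hβ0 hx0 hx1]
    _ ≤ x ^ n * (1 / β) := by
        apply mul_le_mul_of_nonneg_left _ (pow_nonneg hx0 n)
        have h4 : 1 - (1 - x) ^ β ≤ 1 := by
          have := Real.rpow_nonneg (by linarith : (0:ℝ) ≤ 1 - x) β
          linarith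
        exact (div_le_div_iff_of_pos_right hβ0).mpr h4

lemma karlin_remainder_nonneg (hβ1 : β < 1) (hx0 : 0 ≤ x) (hx1 : x < 1) (n : ℕ) :
    0 ≤ ∫ s in (0:ℝ)..x, (x - s) ^ n * (1 - s) ^ (β - 1 - n) := by
  apply intervalIntegral.integral_nonneg hx0
  intro s hs
  have hspos : 0 < 1 - s := by linarith [hs.2]
  have hxs : 0 ≤ x - s := by linarith [hs.2]
  positivity

end MainAnalytic

theorem karlin_hasSum_pow (hβ0 : 0 < β) (hβ1 : β < 1) {x : ℝ} (hx0 : 0 ≤ x) (hx1 : x < 1) :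
    HasSum (fun k => karlinQ β (k + 1) * x ^ (k + 1)) (1 - (1 - x) ^ β) := by
  have hnn : ∀ k, 0 ≤ karlinQ β (k + 1) * x ^ (k + 1) :=
    fun k => mul_nonneg (karlinQ_pos hβ0 hβ1 k).le (pow_nonneg hx0 _)
  set R : ℕ → ℝ := fun n => ((n:ℝ) + 1) * karlinQ β (n + 1)
    * ∫ s in (0:ℝ)..x, (x - s) ^ n * (1 - s) ^ (β - 1 - n) with hR
  have hcoef_nonneg : ∀ n : ℕ, 0 ≤ ((n:ℝ) + 1) * karlinQ β (n + 1) := fun n =>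
    mul_nonneg (by positivity) (karlinQ_pos hβ0 hβ1 n).le
  have hcoef_le : ∀ n : ℕ, ((n:ℝ) + 1) * karlinQ β (n + 1) ≤ β := by
    intro n
    rw [karlinQ_succ hβ1 n]
    have hn1 : ((n:ℝ) + 1) ≠ 0 := by positivity
    have heq : ((n:ℝ) + 1) * (β / ((n:ℝ) + 1)
        * ∏ j ∈ Finset.range n, (((j : ℝ) + 1 - β) / ((j : ℝ) + 1)))
        = β * ∏ j ∈ Finset.range n, (((j : ℝ) + 1 - β) / ((j : ℝ) + 1)) := by
      field_simp
    rw [heq]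
    calc β * ∏ j ∈ Finset.range n, (((j : ℝ) + 1 - β) / ((j : ℝ) + 1))
        ≤ β * 1 := mul_le_mul_of_nonneg_left (karlin_prodratio_le_one hβ0 hβ1 n) hβ0.le
      _ = β := mul_one β
  have hR_nonneg : ∀ n, 0 ≤ R n := fun n =>
    mul_nonneg (hcoef_nonneg n) (karlin_remainder_nonneg hβ1 hx0 hx1 n)
  have hR_le : ∀ n, R n ≤ x ^ n := by
    intro n
    have h1 : R n ≤ β * (x ^ n * (1 / β)) := by
      apply mul_le_mul (hcoef_le n) (karlin_remainder_le hβ0 hβ1 hx0 hx1 n)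
        (karlin_remainder_nonneg hβ1 hx0 hx1 n) hβ0.le
    have h2 : β * (x ^ n * (1 / β)) = x ^ n := by
      field_simp
    linarith
  have hR_tend : Filter.Tendsto R Filter.atTop (nhds 0) :=
    squeeze_zero hR_nonneg hR_le (tendsto_pow_atTop_nhds_zero_of_lt_one hx0 hx1)
  have hsum_eq : ∀ n, ∑ k ∈ Finset.range n, karlinQ β (k + 1) * x ^ (k + 1)
      = (1 - (1 - x) ^ β) - R n := by
    intro n
    have := karlin_taylor_ident hβ0 hβ1 hx0 hx1 n
    rw [hR]
    beta_reduce
    linarith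
  have htend : Filter.Tendsto (fun n => ∑ k ∈ Finset.range n, karlinQ β (k + 1) * x ^ (k + 1))
      Filter.atTop (nhds (1 - (1 - x) ^ β)) := by
    simp only [hsum_eq]
    have := Filter.Tendsto.const_sub (1 - (1 - x) ^ β) hR_tend
    simpa using this
  have hsummable : Summable (fun k => karlinQ β (k + 1) * x ^ (k + 1)) := by
    apply summable_of_sum_range_le (c := 1 - (1 - x) ^ β) hnn
    intro n
    rw [hsum_eq n]
    linarith [hR_nonneg n]
  have h1 : (∑' k, karlinQ β (k + 1) * x ^ (k + 1)) = 1 - (1 - x) ^ β :=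
    tendsto_nhds_unique hsummable.hasSum.tendsto_sum_nat htend
  rw [← h1]
  exact hsummable.hasSum

open MeasureTheory ProbabilityTheory

set_option maxHeartbeats 1000000 in
/-- Let `β ∈ (0,1)`, let `Q` be an `ℕ`-valued random variable with
`P(Q = k) = p_β(k) = β·(1−β)⋯(k−1−β)/k!` for all `k ≥ 1`, let `(U_i)` be i.i.d.
uniform random variables on `[0,1]`, with `Q, U_0, U_1, …` mutually independent
(here `U_0, …, U_{Q-1}` play the role of `U_1, …, U_Q`; note `Q ≥ 1` a.s., so the
minimum below is a.s. over a nonempty finite set). Then the minimum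
`min_{i < Q} U_i` has cumulative distribution function `t ↦ t^β` on `[0,1]`. -/
theorem karlin_random_set_min_cdf
    {Ω : Type*} [MeasurableSpace Ω] (P : Measure Ω) [IsProbabilityMeasure P]
    (β : ℝ) (hβ : β ∈ Set.Ioo (0 : ℝ) 1)
    (Q : Ω → ℕ) (U : ℕ → Ω → ℝ)
    (hQmeas : Measurable Q) (hUmeas : ∀ i, Measurable (U i))
    (hQlaw : ∀ k : ℕ, 1 ≤ k →
      P {ω | Q ω = k}
        = ENNReal.ofReal
            (β * (∏ j ∈ Finset.range (k - 1), ((j : ℝ) + 1 - β)) / (Nat.factorial k)))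
    (hUlaw : ∀ i, Measure.map (U i) P = volume.restrict (Set.Icc (0 : ℝ) 1))
    (hUind : iIndepFun U P)
    (hQU : IndepFun Q (fun ω => fun i => U i ω) P)
    (t : ℝ) (ht : t ∈ Set.Icc (0 : ℝ) 1) :
    P {ω | sInf ((fun i => U i ω) '' {i | i < Q ω}) ≤ t}
      = ENNReal.ofReal (t ^ β) := by
  obtain ⟨hβ0, hβ1⟩ := hβ
  obtain ⟨ht0, ht1⟩ := ht
  have hsetQ : ∀ k : ℕ, MeasurableSet {ω | Q ω = k} := fun k =>
    hQmeas (measurableSet_singleton k)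
  -- the decomposition events
  set G : ℕ → Set Ω := fun n =>
    {ω | Q ω = n} ∩ (if n = 0 then Set.univ else ⋃ i ∈ Finset.range n, U i ⁻¹' Set.Iic t)
    with hG
  -- the min-event equals the union of the G n
  have hmin : ∀ (ω : Ω) (k : ℕ), Q ω = k + 1 →
      (sInf ((fun i => U i ω) '' {i | i < Q ω}) ≤ t ↔ ∃ i < k + 1, U i ω ≤ t) := by
    intro ω k hq
    rw [hq]
    have hfin : ((fun i => U i ω) '' {i | i < k + 1}).Finite :=
      (Set.finite_Iio (k + 1)).image _
    have hne : ((fun i => U i ω) '' {i | i < k + 1}).Nonempty :=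
      ⟨U 0 ω, 0, Nat.succ_pos k, rfl⟩
    constructor
    · intro h
      obtain ⟨i, hi, hval⟩ := hne.csInf_mem hfin
      exact ⟨i, hi, hval.le.trans h⟩
    · rintro ⟨i, hi, hit⟩
      exact le_trans (csInf_le hfin.bddBelow ⟨i, hi, rfl⟩) hit
  have hA : {ω | sInf ((fun i => U i ω) '' {i | i < Q ω}) ≤ t} = ⋃ n, G n := by
    ext ω
    simp only [Set.mem_setOf_eq, Set.mem_iUnion]
    constructor
    · intro h
      refine ⟨Q ω, ?_⟩
      cases hq : Q ω with
      | zero => simp [hG, hq]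
      | succ m =>
          obtain ⟨i, hi, hit⟩ := (hmin ω m hq).mp h
          refine ⟨hq, ?_⟩
          simp only [if_neg (Nat.succ_ne_zero m), Set.mem_iUnion]
          exact ⟨i, Finset.mem_range.mpr hi, hit⟩
    · rintro ⟨n, hn⟩
      cases n with
      | zero =>
          have hq : Q ω = 0 := hn.1
          have : {i | i < Q ω} = (∅ : Set ℕ) := by
            ext i; simp [hq]
          rw [this]
          simp [Real.sInf_empty, ht0]
      | succ m =>
          obtain ⟨hq, hB⟩ := hn
          apply (hmin ω m hq).mpr
          simp only [if_neg (Nat.succ_ne_zero m), Set.mem_iUnion] at hB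
          obtain ⟨i, hi, hit⟩ := hB
          exact ⟨i, Finset.mem_range.mp hi, hit⟩
  have hGmeas : ∀ n, MeasurableSet (G n) := by
    intro n
    apply (hsetQ n).inter
    split_ifs
    · exact MeasurableSet.univ
    · exact (Finset.range n).measurableSet_biUnion fun i _ => (hUmeas i) measurableSet_Iic
  have hGdisj : Pairwise (Function.onFun Disjoint G) := by
    intro m n hmn
    apply Set.disjoint_left.mpr
    intro ω hm hn
    exact hmn (hm.1.symm.trans hn.1)
  rw [hA, measure_iUnion hGdisj hGmeas, tsum_eq_zero_add' ENNReal.summable]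
  -- P (G 0) = 0
  have hQdisj : Pairwise (Function.onFun Disjoint (fun n => {ω : Ω | Q ω = n})) := by
    intro m n hmn
    apply Set.disjoint_left.mpr
    intro ω hm hn
    exact hmn (hm.symm.trans hn)
  have hQlaw' : ∀ n : ℕ, P {ω | Q ω = n + 1} = ENNReal.ofReal (karlinQ β (n + 1)) := by
    intro n
    rw [hQlaw (n + 1) (Nat.le_add_left 1 n)]
    rfl
  have hsum1 : ∑' n : ℕ, P {ω | Q ω = n + 1} = 1 := by
    simp only [hQlaw']
    rw [← ENNReal.ofReal_tsum_of_nonneg (fun n => (karlinQ_pos hβ0 hβ1 n).le)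
      (karlin_hasSum_one hβ0 hβ1).summable, (karlin_hasSum_one hβ0 hβ1).tsum_eq,
      ENNReal.ofReal_one]
  have hQ0 : P {ω | Q ω = 0} = 0 := by
    have huniv : ⋃ n, {ω : Ω | Q ω = n} = Set.univ := by
      ext ω; simp only [Set.mem_iUnion, Set.mem_setOf_eq, Set.mem_univ, iff_true]
      exact ⟨Q ω, rfl⟩
    have h1 : ∑' n : ℕ, P {ω | Q ω = n} = 1 := by
      rw [← measure_iUnion hQdisj (fun n => hsetQ n), huniv, measure_univ]
    rw [tsum_eq_zero_add' ENNReal.summable, hsum1] at h1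
    have h3 := ENNReal.add_sub_cancel_right (a := P {ω | Q ω = 0}) (b := 1) ENNReal.one_ne_top
    rw [h1] at h3
    simp at h3
    exact h3.symm
  have hG0 : P (G 0) = 0 := by
    have : G 0 = {ω | Q ω = 0} := by simp [hG]
    rw [this, hQ0]
  rw [hG0, zero_add]
  -- per-term computation
  have hUlaw2 : ∀ i : ℕ, P (U i ⁻¹' Set.Ioi t) = ENNReal.ofReal (1 - t) := by
    intro i
    rw [← Measure.map_apply (hUmeas i) measurableSet_Ioi, hUlaw i,
      Measure.restrict_apply measurableSet_Ioi]
    have : Set.Ioi t ∩ Set.Icc (0:ℝ) 1 = Set.Ioc t 1 := by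
      ext s
      simp only [Set.mem_inter_iff, Set.mem_Ioi, Set.mem_Icc, Set.mem_Ioc]
      constructor
      · rintro ⟨h1, _, h3⟩; exact ⟨h1, h3⟩
      · rintro ⟨h1, h2⟩; exact ⟨h1, by linarith, h2⟩
    rw [this, Real.volume_Ioc]
  have hGsucc : ∀ n : ℕ, P (G (n + 1))
      = ENNReal.ofReal (karlinQ β (n + 1) * (1 - (1 - t) ^ (n + 1))) := by
    intro n
    have hgn1 : G (n + 1) = {ω | Q ω = n + 1} ∩ ⋃ i ∈ Finset.range (n + 1), U i ⁻¹' Set.Iic t := by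
      simp [hG]
    have hBmeas : MeasurableSet (⋃ i ∈ Finset.range (n + 1), U i ⁻¹' Set.Iic t) :=
      (Finset.range (n + 1)).measurableSet_biUnion fun i _ => (hUmeas i) measurableSet_Iic
    -- independence factorization
    have hS : MeasurableSet (⋃ i ∈ Finset.range (n + 1), (fun f : ℕ → ℝ => f i) ⁻¹' Set.Iic t) :=
      (Finset.range (n + 1)).measurableSet_biUnion fun i _ =>
        (measurable_pi_apply i) measurableSet_Iic
    have hpre : (fun ω => fun i => U i ω) ⁻¹'
        (⋃ i ∈ Finset.range (n + 1), (fun f : ℕ → ℝ => f i) ⁻¹' Set.Iic t)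
        = ⋃ i ∈ Finset.range (n + 1), U i ⁻¹' Set.Iic t := by
      ext ω
      simp
    have hfact := hQU.measure_inter_preimage_eq_mul {n + 1}
      (⋃ i ∈ Finset.range (n + 1), (fun f : ℕ → ℝ => f i) ⁻¹' Set.Iic t)
      (measurableSet_singleton (n + 1)) hS
    rw [hpre] at hfact
    -- complement computation
    have hcompl : (⋃ i ∈ Finset.range (n + 1), U i ⁻¹' Set.Iic t)ᶜ
        = ⋂ i ∈ Finset.range (n + 1), U i ⁻¹' Set.Ioi t := by
      rw [Set.compl_iUnion₂]
      apply Set.iInter₂_congr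
      intro i _
      rw [← Set.preimage_compl, Set.compl_Iic]
    have hprodc : P (⋂ i ∈ Finset.range (n + 1), U i ⁻¹' Set.Ioi t)
        = ENNReal.ofReal (1 - t) ^ (n + 1) := by
      rw [hUind.meas_biInter (fun i _ => ⟨Set.Ioi t, measurableSet_Ioi, rfl⟩)]
      simp only [hUlaw2]
      rw [Finset.prod_const, Finset.card_range]
    have hPB : P (⋃ i ∈ Finset.range (n + 1), U i ⁻¹' Set.Iic t)
        = 1 - ENNReal.ofReal (1 - t) ^ (n + 1) := by
      have h1 : P ((⋃ i ∈ Finset.range (n + 1), U i ⁻¹' Set.Iic t)ᶜ)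
          = 1 - P (⋃ i ∈ Finset.range (n + 1), U i ⁻¹' Set.Iic t) :=
        prob_compl_eq_one_sub hBmeas
      rw [hcompl, hprodc] at h1
      rw [← ENNReal.sub_sub_cancel ENNReal.one_ne_top prob_le_one, ← h1]
    rw [hgn1, show ({ω | Q ω = n + 1} : Set Ω) = Q ⁻¹' {n + 1} from rfl, hfact,
      show (Q ⁻¹' {n + 1} : Set Ω) = {ω | Q ω = n + 1} from rfl, hPB, hQlaw' n]
    rw [← ENNReal.ofReal_pow (by linarith : (0:ℝ) ≤ 1 - t), ← ENNReal.ofReal_one,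
      ← ENNReal.ofReal_sub _ (pow_nonneg (by linarith : (0:ℝ) ≤ 1 - t) (n + 1)),
      ← ENNReal.ofReal_mul (karlinQ_pos hβ0 hβ1 n).le]
  simp only [hGsucc]
  -- sum the series
  have hterm_nonneg : ∀ n : ℕ, 0 ≤ karlinQ β (n + 1) * (1 - (1 - t) ^ (n + 1)) := by
    intro n
    apply mul_nonneg (karlinQ_pos hβ0 hβ1 n).le
    have h1 : (1 - t) ^ (n + 1) ≤ 1 := by
      apply pow_le_one₀ (by linarith) (by linarith)
    linarith
  have hsummable : Summable (fun n : ℕ => karlinQ β (n + 1) * (1 - (1 - t) ^ (n + 1))) := by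
    apply Summable.of_nonneg_of_le hterm_nonneg _ (karlin_hasSum_one hβ0 hβ1).summable
    intro n
    have h1 : (1 - t) ^ (n + 1) ≥ 0 := pow_nonneg (by linarith) (n + 1)
    nlinarith [(karlinQ_pos hβ0 hβ1 n).le]
  rw [← ENNReal.ofReal_tsum_of_nonneg hterm_nonneg hsummable]
  congr 1
  -- the real series sums to t ^ β
  rcases eq_or_lt_of_le ht0 with h0 | h0
  · rw [← h0]
    simp only [sub_zero, one_pow]
    simp [Real.zero_rpow (ne_of_gt hβ0)]
  · have hx0 : (0:ℝ) ≤ 1 - t := by linarith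
    have hx1 : 1 - t < 1 := by linarith
    have hsum := (karlin_hasSum_one hβ0 hβ1).sub (karlin_hasSum_pow hβ0 hβ1 hx0 hx1)
    have heq : (fun k => karlinQ β (k + 1) - karlinQ β (k + 1) * (1 - t) ^ (k + 1))
        = fun k => karlinQ β (k + 1) * (1 - (1 - t) ^ (k + 1)) := by
      funext k; ring
    rw [heq] at hsum
    have hval : 1 - (1 - (1 - (1 - t)) ^ β) = t ^ β := by
      have : 1 - (1 - t) = t := by ring
      rw [this]; ring
    rw [hval] at hsum
    exact hsum.tsum_eq
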